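/- The function W : (ℂ∖{0})² → ℂ defined by W(y_1, y_2) = 2y_1 + y_2 + y_1^{−1} + y_1^{−1}y_2^{−1} + 3·y_2^{−1} + y_1 y_2^{−1} has exactly 6 critical points, and each of these critical points is nondegenerate. -/

import Mathlib

/-- The potential function of the monotone fiber `L(1,1)` in `X̂₅` with the chosen bulk deformation (energy factor dropped). -/
noncomputable def W : ℂ → ℂ → ℂ := fun y₁ y₂ =>
  2 * y₁ + y₂ + y₁⁻¹ + y₁⁻¹ * y₂⁻¹ + 3 * y₂⁻¹ + y₁ * y₂⁻¹

/-- A point of `(ℂ∖{0})²` is a critical point of `W` if both partial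
derivatives of `W` vanish there. -/
def IsCritPt (p : ℂ × ℂ) : Prop :=
  p.1 ≠ 0 ∧ p.2 ≠ 0 ∧
    deriv (fun z => W z p.2) p.1 = 0 ∧ deriv (fun z => W p.1 z) p.2 = 0

/-- The Hessian determinant
`(∂²W/∂y₁²)(∂²W/∂y₂²) - (∂²W/∂y₁∂y₂)²` of `W` at a point. -/
noncomputable def hessDet (p : ℂ × ℂ) : ℂ :=
  deriv (deriv (fun z => W z p.2)) p.1 * deriv (deriv (fun z => W p.1 z)) p.2
    - (deriv (fun w => deriv (fun z => W z w) p.1) p.2) ^ 2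


lemma dW1 (x y : ℂ) (hx : x ≠ 0) :
    HasDerivAt (fun z => W z y) (2 - (x^2)⁻¹ - (x^2)⁻¹ * y⁻¹ + y⁻¹) x := by
  have h1 : HasDerivAt (fun z : ℂ => z⁻¹) (-(x^2)⁻¹) x := hasDerivAt_inv hx
  have h := ((((((hasDerivAt_id x).const_mul (2:ℂ)).add_const y).add h1).add
      (h1.mul_const y⁻¹)).add_const (3 * y⁻¹)).add ((hasDerivAt_id x).mul_const y⁻¹)
  exact h.congr_deriv (by ring)

lemma dW2 (x y : ℂ) (hy : y ≠ 0) :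
    HasDerivAt (fun z => W x z) (1 - x⁻¹*(y^2)⁻¹ - 3*(y^2)⁻¹ - x*(y^2)⁻¹) y := by
  have h1 : HasDerivAt (fun z : ℂ => z⁻¹) (-(y^2)⁻¹) y := hasDerivAt_inv hy
  have h := (((((hasDerivAt_const y (2*x)).add (hasDerivAt_id y)).add_const x⁻¹).add
      (h1.const_mul x⁻¹)).add (h1.const_mul (3:ℂ))).add (h1.const_mul x)
  exact h.congr_deriv (by ring)

lemma deriv_W1 (x y : ℂ) (hx : x ≠ 0) :
    deriv (fun z => W z y) x = 2 - (x^2)⁻¹ - (x^2)⁻¹ * y⁻¹ + y⁻¹ := (dW1 x y hx).deriv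

lemma deriv_W2 (x y : ℂ) (hy : y ≠ 0) :
    deriv (fun z => W x z) y = 1 - x⁻¹*(y^2)⁻¹ - 3*(y^2)⁻¹ - x*(y^2)⁻¹ := (dW2 x y hy).deriv

lemma deriv_W11 (x y : ℂ) (hx : x ≠ 0) :
    deriv (deriv (fun z => W z y)) x = (2*x)/(x^2)^2 + ((2*x)/(x^2)^2) * y⁻¹ := by
  have hev : deriv (fun z => W z y) =ᶠ[nhds x] (fun z => 2 - (z^2)⁻¹ - (z^2)⁻¹ * y⁻¹ + y⁻¹) := by
    filter_upwards [eventually_ne_nhds hx] with z hz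
    exact deriv_W1 z y hz
  rw [hev.deriv_eq]
  have h2 : HasDerivAt (fun z : ℂ => (z^2)⁻¹) (-((2:ℂ)*x^1)/(x^2)^2) x := by
    have := (hasDerivAt_pow 2 x).inv (pow_ne_zero 2 hx)
    exact this
  have h := (((hasDerivAt_const x (2:ℂ)).sub h2).sub (h2.mul_const y⁻¹)).add_const y⁻¹
  exact h.deriv.trans (by ring)

lemma deriv_W22 (x y : ℂ) (hy : y ≠ 0) :
    deriv (deriv (fun z => W x z)) y =
      x⁻¹*((2*y)/(y^2)^2) + 3*((2*y)/(y^2)^2) + x*((2*y)/(y^2)^2) := by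
  have hev : deriv (fun z => W x z) =ᶠ[nhds y]
      (fun z => 1 - x⁻¹*(z^2)⁻¹ - 3*(z^2)⁻¹ - x*(z^2)⁻¹) := by
    filter_upwards [eventually_ne_nhds hy] with z hz
    exact deriv_W2 x z hz
  rw [hev.deriv_eq]
  have h2 : HasDerivAt (fun z : ℂ => (z^2)⁻¹) (-((2:ℂ)*y^1)/(y^2)^2) y := by
    have := (hasDerivAt_pow 2 y).inv (pow_ne_zero 2 hy)
    exact this
  have h := (((hasDerivAt_const y (1:ℂ)).sub (h2.const_mul x⁻¹)).sub
      (h2.const_mul (3:ℂ))).sub (h2.const_mul x)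
  exact h.deriv.trans (by ring)

lemma deriv_W12 (x y : ℂ) (hx : x ≠ 0) (hy : y ≠ 0) :
    deriv (fun w => deriv (fun z => W z w) x) y = (x^2)⁻¹*(y^2)⁻¹ - (y^2)⁻¹ := by
  have hfun : (fun w => deriv (fun z => W z w) x) =
      (fun w => 2 - (x^2)⁻¹ - (x^2)⁻¹ * w⁻¹ + w⁻¹) := by
    funext w
    exact deriv_W1 x w hx
  rw [hfun]
  have h1 : HasDerivAt (fun w : ℂ => w⁻¹) (-(y^2)⁻¹) y := hasDerivAt_inv hy
  have h := ((hasDerivAt_const y ((2:ℂ) - (x^2)⁻¹)).sub (h1.const_mul (x^2)⁻¹)).add h1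
  have h' : HasDerivAt (fun w : ℂ => 2 - (x^2)⁻¹ - (x^2)⁻¹ * w⁻¹ + w⁻¹)
      ((x^2)⁻¹*(y^2)⁻¹ - (y^2)⁻¹) y := by
    exact h.congr_deriv (by ring)
  exact h'.deriv


lemma crit_iff (x y : ℂ) : IsCritPt (x, y) ↔
    x ≠ 0 ∧ y ≠ 0 ∧ x^2*(2*y+1) = y+1 ∧ x*y^2 = x^2+3*x+1 := by
  unfold IsCritPt
  simp only
  constructor
  · rintro ⟨hx, hy, h1, h2⟩
    rw [deriv_W1 x y hx] at h1
    rw [deriv_W2 x y hy] at h2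
    refine ⟨hx, hy, ?_, ?_⟩
    · field_simp at h1
      have h' : x^2*y*(x^2*(2*y+1) - (y+1)) = 0 := by linear_combination x^2*y*h1
      have := (mul_eq_zero.mp h').resolve_left (mul_ne_zero (pow_ne_zero 2 hx) hy)
      linear_combination this
    · field_simp at h2
      have h' : y^4*(x*y^2 - (x^2+3*x+1)) = 0 := by linear_combination y^4*h2
      have := (mul_eq_zero.mp h').resolve_left (pow_ne_zero 4 hy)
      linear_combination this
  · rintro ⟨hx, hy, h1, h2⟩
    refine ⟨hx, hy, ?_, ?_⟩
    · rw [deriv_W1 x y hx]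
      field_simp
      linear_combination h1
    · rw [deriv_W2 x y hy]
      field_simp
      linear_combination h2

lemma crit_param (x y : ℂ) : IsCritPt (x, y) ↔
    (2*y^6+3*y^5-11*y^4-18*y^3+3*y^2+15*y+5 = 0 ∧
      x = (3*y+2)/((2*y+1)*(y^2-3))) := by
  rw [crit_iff]
  constructor
  · rintro ⟨hx, hy, hE1, hE2⟩
    have h21 : 2*y+1 ≠ 0 := by
      intro h
      have hy1 : y = -1 := by linear_combination -hE1 + x^2*h
      rw [hy1] at h; norm_num at h
    have h3 : y^2-3 ≠ 0 := by
      intro h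
      have hx2 : x^2 = -1 := by linear_combination -hE2 + x*h
      have hy3 : 3*y+2 = 0 := by linear_combination -hE1 + (2*y+1)*hx2
      have : (23:ℂ) = 0 := by linear_combination (3*y-2)*hy3 - 9*h
      norm_num at this
    have hX : x*((2*y+1)*(y^2-3)) = 3*y+2 := by
      linear_combination (2*y+1)*hE2 + hE1
    refine ⟨?_, ?_⟩
    · linear_combination (x*((2*y+1)*(y^2-3)) + 3*y+2)*hX - (2*y+1)*(y^2-3)^2*hE1
    · rw [eq_div_iff (mul_ne_zero h21 h3)]; exact hX
  · rintro ⟨hP, hxg⟩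
    have hy : y ≠ 0 := by
      intro h; rw [h] at hP; norm_num at hP
    have h21 : 2*y+1 ≠ 0 := by
      intro h
      have : y = -1/2 := by linear_combination h/2
      rw [this] at hP; norm_num at hP
    have h3 : y^2-3 ≠ 0 := by
      intro h
      have h12 : 12*y+31 = 0 := by
        linear_combination (2*y^4+3*y^3-5*y^2-9*y-12)*h - hP
      have : (529:ℂ) = 0 := by linear_combination 144*h - (12*y-31)*h12
      norm_num at this
    have h32 : 3*y+2 ≠ 0 := by
      intro h
      have : y = -2/3 := by linear_combination h/3
      rw [this] at hP; norm_num at hP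
    have hx : x ≠ 0 := by
      rw [hxg]; exact div_ne_zero h32 (mul_ne_zero h21 h3)
    have hX : x*((2*y+1)*(y^2-3)) = 3*y+2 := by
      rw [hxg, div_mul_cancel₀ _ (mul_ne_zero h21 h3)]
    have hE1 : x^2*(2*y+1) = y+1 := by
      apply mul_right_cancel₀ (mul_ne_zero h21 (pow_ne_zero 2 h3))
      linear_combination (x*((2*y+1)*(y^2-3)) + 3*y+2)*hX - hP
    have hE2 : x*y^2 = x^2+3*x+1 := by
      apply mul_right_cancel₀ h21
      linear_combination hX - hE1
    exact ⟨hx, hy, hE1, hE2⟩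

lemma hess_key (x y : ℂ) (hx : x ≠ 0) (hy : y ≠ 0) :
    hessDet (x, y) * (x^4*y^4) = 4*(y+1)*(x^2+3*x+1) - (1-x^2)^2 := by
  have e1 := deriv_W11 x y hx
  have e2 := deriv_W22 x y hy
  have e3 := deriv_W12 x y hx hy
  unfold hessDet
  simp only at e1 e2 e3 ⊢
  rw [e1, e2, e3]
  field_simp
  ring_nf

lemma hess_ne (p : ℂ × ℂ) (h : IsCritPt p) : hessDet p ≠ 0 := by
  obtain ⟨x, y⟩ := p
  obtain ⟨hP, hxg⟩ := (crit_param x y).mp h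
  obtain ⟨hx, hy, hE1, hE2⟩ := (crit_iff x y).mp h
  have h21 : 2*y+1 ≠ 0 := by
    intro hh
    have : y = -1/2 := by linear_combination hh/2
    rw [this] at hP; norm_num at hP
  have h3 : y^2-3 ≠ 0 := by
    intro hh
    have h12 : 12*y+31 = 0 := by
      linear_combination (2*y^4+3*y^3-5*y^2-9*y-12)*hh - hP
    have : (529:ℂ) = 0 := by linear_combination 144*hh - (12*y-31)*h12
    norm_num at this
  have hX : x*((2*y+1)*(y^2-3)) = 3*y+2 := by
    rw [hxg, div_mul_cancel₀ _ (mul_ne_zero h21 h3)]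
  intro h0
  have hkey := hess_key x y hx hy
  rw [h0, zero_mul] at hkey
  have h0' : 4*(y+1)*(x^2+3*x+1) - (1-x^2)^2 = 0 := hkey.symm
  have hA : 4*(y+1)*(x*y^2) - (1-x^2)^2 = 0 := by
    linear_combination h0' + 4*(y+1)*hE2
  have hB : 4*(y+1)*(x*y^2)*(2*y+1)^2 - y^2 = 0 := by
    linear_combination (2*y+1)^2*hA - ((1-x^2)*(2*y+1)+y)*hE1
  have hQ0 : y^2*(24*y^3+51*y^2+36*y+11) = 0 := by
    linear_combination (y^2-3)*hB - 4*(y+1)*y^2*(2*y+1)*hX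
  have hQ : 24*y^3+51*y^2+36*y+11 = 0 :=
    (mul_eq_zero.mp hQ0).resolve_left (pow_ne_zero 2 hy)
  have : (67566157:ℂ) = 0 := by
    linear_combination (-57691071 - 91725912*y - 63293184*y^2)*hP +
      (32365592 + 14439483*y - 27730797*y^2 - 29885721*y^3 + 4347306*y^4 + 5274432*y^5)*hQ
  norm_num at this

open Polynomial in
noncomputable def p6 : Polynomial ℂ :=
  C 2 * X^6 + C 3 * X^5 - C 11 * X^4 - C 18 * X^3 + C 3 * X^2 + C 15 * X + C 5

open Polynomial in
lemma p6_eval (z : ℂ) : p6.eval z = 2*z^6+3*z^5-11*z^4-18*z^3+3*z^2+15*z+5 := by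
  simp [p6]

lemma p6_natDegree : p6.natDegree = 6 := by
  unfold p6; compute_degree!

lemma p6_ne : p6 ≠ 0 := by
  intro h
  have := p6_natDegree
  rw [h] at this
  simp at this

open Polynomial in
lemma p6_sep : p6.Separable := by
  rw [Polynomial.separable_def]
  refine ⟨C (7770108055:ℂ)⁻¹ * (C (-5781215314) + C 10671366546 * X + C 6370770981 * X^2
      + C (-3009432150) * X^3 + C (-1428708168) * X^4),
    C (7770108055:ℂ)⁻¹ * (C 2445078975 + C 1246061542 * X + C (-3334854117) * X^2
      + C (-1447363759) * X^3 + C 561101532 * X^4 + C 238118028 * X^5), ?_⟩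
  have key : (C (-5781215314:ℂ) + C 10671366546 * X + C 6370770981 * X^2
      + C (-3009432150) * X^3 + C (-1428708168) * X^4) * p6
      + (C 2445078975 + C 1246061542 * X + C (-3334854117) * X^2
      + C (-1447363759) * X^3 + C 561101532 * X^4 + C 238118028 * X^5) * derivative p6
      = C 7770108055 := by
    apply Polynomial.funext
    intro z
    simp [p6, derivative_add, derivative_sub, derivative_C_mul, derivative_X_pow]
    ring
  calc C (7770108055:ℂ)⁻¹ * (C (-5781215314) + C 10671366546 * X + C 6370770981 * X^2
        + C (-3009432150) * X^3 + C (-1428708168) * X^4) * p6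
      + C (7770108055:ℂ)⁻¹ * (C 2445078975 + C 1246061542 * X + C (-3334854117) * X^2
        + C (-1447363759) * X^3 + C 561101532 * X^4 + C 238118028 * X^5) * derivative p6
      = C (7770108055:ℂ)⁻¹ * ((C (-5781215314) + C 10671366546 * X + C 6370770981 * X^2
        + C (-3009432150) * X^3 + C (-1428708168) * X^4) * p6
      + (C 2445078975 + C 1246061542 * X + C (-3334854117) * X^2
        + C (-1447363759) * X^3 + C 561101532 * X^4 + C 238118028 * X^5) * derivative p6) := by
        ring
    _ = 1 := by rw [key, ← C_mul]; norm_num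

open Polynomial in
lemma roots_card : ({y : ℂ | 2*y^6+3*y^5-11*y^4-18*y^3+3*y^2+15*y+5 = 0}).ncard = 6 := by
  have hset : {y : ℂ | 2*y^6+3*y^5-11*y^4-18*y^3+3*y^2+15*y+5 = 0}
      = ↑p6.roots.toFinset := by
    ext z
    simp only [Set.mem_setOf_eq, Finset.coe_sort_coe, Multiset.mem_toFinset,
      Finset.mem_coe, mem_roots p6_ne, IsRoot.def, p6_eval]
  rw [hset, Set.ncard_coe_finset,
    Multiset.toFinset_card_of_nodup (Polynomial.nodup_roots p6_sep),
    Polynomial.splits_iff_card_roots.mp (IsAlgClosed.splits p6),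
    p6_natDegree]


/-- `W` has exactly 6 critical points in `(ℂ∖{0})²`, and each of them is
nondegenerate (nonvanishing Hessian determinant). -/
theorem W_critical_points :
    {p : ℂ × ℂ | IsCritPt p}.ncard = 6 ∧
      ∀ p : ℂ × ℂ, IsCritPt p → hessDet p ≠ 0 := by
  refine ⟨?_, hess_ne⟩
  have hset : {p : ℂ × ℂ | IsCritPt p} =
      (fun y : ℂ => ((3*y+2)/((2*y+1)*(y^2-3)), y)) ''
        {y : ℂ | 2*y^6+3*y^5-11*y^4-18*y^3+3*y^2+15*y+5 = 0} := by
    ext ⟨x, y⟩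
    simp only [Set.mem_setOf_eq, Set.mem_image]
    rw [crit_param]
    constructor
    · rintro ⟨hP, hxg⟩
      exact ⟨y, hP, by rw [hxg]⟩
    · rintro ⟨w, hw, heq⟩
      obtain ⟨h1, h2⟩ := Prod.mk.injEq _ _ _ _ ▸ heq
      subst h2
      exact ⟨hw, h1.symm⟩
  rw [hset, Set.ncard_image_of_injective _ (fun a b hab => congrArg Prod.snd hab),
    roots_card]
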